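/- Let R be a Noetherian standard graded ring with (R₀, m₀, k) local and M ≠ 0 a finitely generated graded R-module. Then 0 ≤ reg_R(M,k) + indeg(M) ≤ reg_R(k,k). -/

import Mathlib

open DirectSum CategoryTheory CategoryTheory.Limits Opposite

noncomputable section
section GradedSetup

variable (R₀ : Type) [CommRing R₀] (R : Type) [CommRing R] [Algebra R₀ R]
variable (𝒜 : ℤ → Submodule R₀ R)

/-- `R = R₀[R₁]` is a standard graded ring: nonnegatively graded, `𝒜 0 = R₀·1` and
generated in degree one. -/
def IsStandardGraded : Prop :=
  (∀ n : ℤ, n < 0 → 𝒜 n = ⊥) ∧ (𝒜 0 = 1) ∧ (∀ n : ℤ, 0 ≤ n → 𝒜 (n + 1) = 𝒜 n * 𝒜 1)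

/-- The irrelevant ideal `R₊` of a graded ring. -/
def irrelevant : Ideal R :=
  Ideal.span (⋃ n : {n : ℤ // 0 < n}, ((𝒜 n.1 : Submodule R₀ R) : Set R))

/-- The graded maximal ideal `m₀ R + R₊` when `R₀` is local. -/
def gradedMax [IsLocalRing R₀] : Ideal R :=
  irrelevant R₀ R 𝒜 ⊔
    Ideal.span ((algebraMap R₀ R) '' (IsLocalRing.maximalIdeal R₀ : Set R₀))

end GradedSetup

section Degrees

variable {A M : Type} [Semiring A] [AddCommMonoid M] [Module A M]

/-- The set of degrees in which a graded module is nonzero. -/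
def degSet (ℳ : ℤ → Submodule A M) : Set ℤ := {n | ℳ n ≠ ⊥}

/-- The initial degree of a graded module. -/
noncomputable def indeg (ℳ : ℤ → Submodule A M) : ℤ := sInf (degSet ℳ)

/-- The end (top degree) of a graded module. -/
noncomputable def endeg (ℳ : ℤ → Submodule A M) : ℤ := sSup (degSet ℳ)

end Degrees
section FreeRes

variable (R₀ : Type) [CommRing R₀] (R : Type) [CommRing R] [Algebra R₀ R]
variable (𝒜 : ℤ → Submodule R₀ R)

/-- The graded free module `⊕_j R(-j)^{β j}`. -/
abbrev stdFree (β : ℤ → ℕ) : Type := (Σ j : ℤ, Fin (β j)) →₀ R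

/-- The degree `n` component of `⊕_j R(-j)^{β j}`. -/
def stdFreeGrading (β : ℤ → ℕ) (n : ℤ) : Submodule R₀ (stdFree R β) where
  carrier := {f | ∀ p : Σ j : ℤ, Fin (β j), f p ∈ 𝒜 (n - p.1)}
  add_mem' := fun hf hg p => by
    rw [Finsupp.add_apply]; exact add_mem (hf p) (hg p)
  zero_mem' := fun p => by simp
  smul_mem' := fun c f hf p => by
    rw [Finsupp.smul_apply]; exact Submodule.smul_mem _ c (hf p)

variable (M : Type) [AddCommGroup M] [Module R M] [Module R₀ M]

/-- A graded free resolution of a graded `R`-module `(M, ℳ)`, recorded through its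
graded Betti numbers `β`, differentials `d` and augmentation `aug`. -/
structure GradedFreeRes (ℳ : ℤ → Submodule R₀ M) where
  β : ℕ → ℤ → ℕ
  finite : ∀ i, (Function.support (β i)).Finite
  d : (i : ℕ) → stdFree R (β (i + 1)) →ₗ[R] stdFree R (β i)
  aug : stdFree R (β 0) →ₗ[R] M
  aug_surj : Function.Surjective aug
  exact_aug : Function.Exact (d 0) aug
  exact : ∀ i, Function.Exact (d (i + 1)) (d i)
  graded_d : ∀ i n x, x ∈ stdFreeGrading R₀ R 𝒜 (β (i + 1)) n →
    d i x ∈ stdFreeGrading R₀ R 𝒜 (β i) n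
  graded_aug : ∀ n x, x ∈ stdFreeGrading R₀ R 𝒜 (β 0) n → aug x ∈ ℳ n

/-- A minimal graded free resolution: a graded free resolution whose differentials map into
`m·F` where `m` is the given (graded) maximal ideal. -/
structure MinGradedFreeRes (mIdeal : Ideal R) (ℳ : ℤ → Submodule R₀ M)
    extends GradedFreeRes R₀ R 𝒜 M ℳ where
  minimal : ∀ i, LinearMap.range (d i) ≤ mIdeal • (⊤ : Submodule R (stdFree R (β i)))

/-- The initial degree of the `i`-th Tor module `Tor_i(M,k)` read off from a minimal graded
free resolution: the smallest twist appearing in homological degree `i`. -/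
def torDegSet {mIdeal : Ideal R} {ℳ : ℤ → Submodule R₀ M}
    (F : MinGradedFreeRes R₀ R 𝒜 M mIdeal ℳ) (i : ℕ) : Set ℤ :=
  {j | F.β i j ≠ 0}

/-- The set `{i - j | β_{ij} ≠ 0}` whose supremum is `reg_R(M,k) = max_i {i - indeg Tor_i(M,k)}`. -/
def regSet {mIdeal : Ideal R} {ℳ : ℤ → Submodule R₀ M}
    (F : MinGradedFreeRes R₀ R 𝒜 M mIdeal ℳ) : Set ℤ :=
  {z | ∃ (i : ℕ) (j : ℤ), F.β i j ≠ 0 ∧ z = (i : ℤ) - j}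

end FreeRes
section Residue

variable (R₀ : Type) [CommRing R₀] [IsLocalRing R₀] (R : Type) [CommRing R] [Algebra R₀ R]
variable (𝒜 : ℤ → Submodule R₀ R)

/-- The residue field `k = R/(m₀ R + R₊)` of a standard graded ring over a local base. -/
abbrev resField : Type := R ⧸ gradedMax R₀ R 𝒜

/-- The grading of the residue field: concentrated in degree `0`. -/
def resFieldGrading (n : ℤ) : Submodule R₀ (resField R₀ R 𝒜) :=
  if n = 0 then ⊤ else ⊥

end Residue



/-- Abstract graded decomposition data on an additive group. -/
structure GD (N : Type) [AddCommMonoid N] where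
  mem : ℤ → N → Prop
  zero_mem : ∀ n, mem n 0
  add_mem : ∀ {n x y}, mem n x → mem n y → mem n (x + y)
  proj : ℤ → N → N
  proj_add : ∀ n x y, proj n (x + y) = proj n x + proj n y
  proj_zero : ∀ n, proj n 0 = 0
  proj_mem : ∀ n x, mem n (proj n x)
  proj_same : ∀ {n x}, mem n x → proj n x = x
  proj_ne : ∀ {m n x}, m ≠ n → mem m x → proj n x = 0
  decomp : ∀ x, ∃ S : Finset ℤ, x = ∑ n ∈ S, proj n x

namespace GD

variable {N : Type} [AddCommMonoid N] (g : GD N)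

lemma proj_sum {ι : Type*} (s : Finset ι) (f : ι → N) (n : ℤ) :
    g.proj n (∑ i ∈ s, f i) = ∑ i ∈ s, g.proj n (f i) := by
  classical
  induction s using Finset.induction with
  | empty => simp [g.proj_zero]
  | insert _ _ h ih => simp [Finset.sum_insert h, g.proj_add, ih]

lemma sum_mem {ι : Type*} (s : Finset ι) (f : ι → N) (n : ℤ)
    (h : ∀ i ∈ s, g.mem n (f i)) : g.mem n (∑ i ∈ s, f i) := by
  classical
  induction s using Finset.induction with
  | empty => simpa using g.zero_mem n
  | @insert a s ha ih =>
      rw [Finset.sum_insert ha]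
      exact g.add_mem (h a (Finset.mem_insert_self a s))
        (ih fun i hi => h i (Finset.mem_insert_of_mem hi))

lemma proj_not_mem_decomp {x : N} {S : Finset ℤ} (hS : x = ∑ n ∈ S, g.proj n x)
    {m : ℤ} (hm : m ∉ S) : g.proj m x = 0 := by
  classical
  have : g.proj m x = ∑ n ∈ S, g.proj m (g.proj n x) := by
    conv_lhs => rw [hS]
    exact g.proj_sum S _ m
  rw [this]
  refine Finset.sum_eq_zero fun n hn => g.proj_ne (fun h => hm (h ▸ hn)) (g.proj_mem n x)

end GD

/-- Homogeneous surjectivity onto range: if `φ` is graded and `y = φ x₀` is homogeneous,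
then `y = φ x` for some homogeneous `x`. -/
lemma GD.hom_lift {N N' : Type} [AddCommMonoid N] [AddCommMonoid N']
    (g : GD N) (g' : GD N') (φ : N → N')
    (hadd : ∀ s : Finset ℤ, ∀ f : ℤ → N, φ (∑ n ∈ s, f n) = ∑ n ∈ s, φ (f n))
    (hgr : ∀ n x, g.mem n x → g'.mem n (φ x)) {n : ℤ} {y : N'}
    (hy : g'.mem n y) {x₀ : N} (hx₀ : φ x₀ = y) :
    ∃ x, g.mem n x ∧ φ x = y := by
  classical
  obtain ⟨S, hS⟩ := g.decomp x₀
  by_cases hn : n ∈ S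
  · refine ⟨g.proj n x₀, g.proj_mem n x₀, ?_⟩
    have h1 : y = ∑ m ∈ S, φ (g.proj m x₀) := by rw [← hx₀]; conv_lhs => rw [hS]; rw [hadd]
    have h2 : g'.proj n y = φ (g.proj n x₀) := by
      rw [h1, g'.proj_sum]
      rw [Finset.sum_eq_single n]
      · exact g'.proj_same (hgr n _ (g.proj_mem n x₀))
      · intro m hm hmn; exact g'.proj_ne hmn (hgr m _ (g.proj_mem m x₀))
      · intro h; exact absurd hn h
    rw [← h2, g'.proj_same hy]
  · have h1 : y = ∑ m ∈ S, φ (g.proj m x₀) := by rw [← hx₀]; conv_lhs => rw [hS]; rw [hadd]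
    have h2 : g'.proj n y = 0 := by
      rw [h1, g'.proj_sum]
      refine Finset.sum_eq_zero fun m hm => g'.proj_ne (fun h => hn (h ▸ hm)) (hgr m _ (g.proj_mem m x₀))
    have : y = 0 := by rw [← g'.proj_same hy, h2]
    exact ⟨0, g.zero_mem n, by rw [this]; simpa using hadd ∅ (fun _ => 0)⟩

/-- GD from a `DirectSum.Decomposition` by submodules. -/
def GD.ofDecomposition {A N : Type} [Semiring A] [AddCommMonoid N] [Module A N]
    (𝒩 : ℤ → Submodule A N) [DirectSum.Decomposition 𝒩] : GD N where
  mem := fun n x => x ∈ 𝒩 n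
  zero_mem := fun n => Submodule.zero_mem _
  add_mem := fun hx hy => Submodule.add_mem _ hx hy
  proj := fun n x => ↑(DirectSum.decompose 𝒩 x n)
  proj_add := fun n x y => by simp [DirectSum.decompose_add]
  proj_zero := fun n => by simp
  proj_mem := fun n x => (DirectSum.decompose 𝒩 x n).2
  proj_same := fun {n x} h => by
    simp only [DirectSum.decompose_of_mem_same 𝒩 h]
  proj_ne := fun {m n x} h hx => by
    simp only [DirectSum.decompose_of_mem_ne 𝒩 hx h]
  decomp := fun x => by
    classical
    exact ⟨(DirectSum.decompose 𝒩 x).support, (DirectSum.sum_support_decompose 𝒩 x).symm⟩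

/-- GD on `ι →₀ N` with weights `w`, from GD on `N`. -/
def GD.finsupp {N : Type} [AddCommMonoid N] (g : GD N) {ι : Type} (w : ι → ℤ) :
    GD (ι →₀ N) where
  mem n f := ∀ a, g.mem (n - w a) (f a)
  zero_mem n a := by simpa using g.zero_mem (n - w a)
  add_mem hx hy a := by
    rw [Finsupp.add_apply]; exact g.add_mem (hx a) (hy a)
  proj n f := Finsupp.onFinset f.support (fun a => g.proj (n - w a) (f a))
    (fun a h => by
      rw [Finsupp.mem_support_iff]
      intro h0; simp only [h0, g.proj_zero] at h; exact h rfl)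
  proj_add n x y := by
    ext a; simp only [Finsupp.onFinset_apply, Finsupp.add_apply]
    exact g.proj_add _ _ _
  proj_zero n := by ext a; simp [g.proj_zero]
  proj_mem n x a := by simpa using g.proj_mem (n - w a) (x a)
  proj_same {n x} h := by
    ext a; simpa using g.proj_same (h a)
  proj_ne {m n x} h hx := by
    ext a; simp only [Finsupp.onFinset_apply, Finsupp.coe_zero, Pi.zero_apply]
    exact g.proj_ne (fun e => h (by omega)) (hx a)
  decomp f := by
    classical
    refine ⟨f.support.biUnion (fun a =>
      (Classical.choose (g.decomp (f a))).image (· + w a)), ?_⟩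
    ext a
    rw [Finset.sum_apply']
    simp only [Finsupp.onFinset_apply]
    by_cases ha : a ∈ f.support
    · set S := f.support.biUnion (fun a =>
        (Classical.choose (g.decomp (f a))).image (· + w a)) with hSdef
      have hSa := Classical.choose_spec (g.decomp (f a))
      set Sa := Classical.choose (g.decomp (f a)) with hSadef
      have hsub : Sa ⊆ S.image (· - w a) := by
        intro m hm
        refine Finset.mem_image.2 ⟨m + w a, ?_, by ring⟩
        exact Finset.mem_biUnion.2 ⟨a, ha, Finset.mem_image.2 ⟨m, hm, rfl⟩⟩
      have h1 : ∑ n ∈ S, g.proj (n - w a) (f a)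
          = ∑ m ∈ S.image (· - w a), g.proj m (f a) := by
        rw [Finset.sum_image]
        intro x _ y _ h; have h' : x - w a = y - w a := h; omega
      rw [h1, ← Finset.sum_subset hsub (fun m _ hm => g.proj_not_mem_decomp hSa hm)]
      exact hSa
    · have h0 : f a = 0 := Finsupp.notMem_support_iff.1 ha
      rw [h0]
      exact (Finset.sum_eq_zero fun n _ => g.proj_zero _).symm

section Ext

variable {R : Type} [CommRing R]

/-- swap of nested finsupps. -/
def swapF {A P : Type} : (A →₀ (P →₀ R)) ≃ₗ[R] (P →₀ (A →₀ R)) :=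
  (Finsupp.finsuppProdLEquiv R).symm ≪≫ₗ
    Finsupp.domLCongr (Equiv.prodComm A P) ≪≫ₗ Finsupp.finsuppProdLEquiv R

@[simp] lemma swapF_apply {A P : Type} (f : A →₀ (P →₀ R)) (p : P) (a : A) :
    (swapF f) p a = f a p := by
  simp [swapF, Finsupp.finsuppProdLEquiv, Finsupp.domLCongr_apply,
    Finsupp.equivMapDomain_apply, Finsupp.curryLinearEquiv_symm_apply_apply, Finsupp.curry_apply]

variable {A B : Type} (L : (A →₀ R) →ₗ[R] (B →₀ R))
variable (N : Type) [AddCommGroup N] [Module R N]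

/-- for fixed `a`, the column map `v ↦ ∑_b L(δ_a)_b • v ⬝ δ_b`. -/
def colMap (a : A) : N →ₗ[R] (B →₀ N) where
  toFun v := (L (Finsupp.single a 1)).sum fun b s => Finsupp.single b (s • v)
  map_add' v w := by
    rw [← Finsupp.sum_add]
    exact Finsupp.sum_congr fun b _ => by rw [smul_add, Finsupp.single_add]
  map_smul' c v := by
    show ((L (Finsupp.single a 1)).sum fun b s => Finsupp.single b (s • (c • v)))
        = c • (L (Finsupp.single a 1)).sum fun b s => Finsupp.single b (s • v)
    rw [Finsupp.smul_sum]
    exact Finsupp.sum_congr fun b _ => by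
      rw [Finsupp.smul_single, smul_comm]

/-- Base change of a map between free finsupp modules to coefficients `N`. -/
def extMap : (A →₀ N) →ₗ[R] (B →₀ N) := Finsupp.lsum R (fun a => colMap L N a)

lemma extMap_single (a : A) (v : N) :
    extMap L N (Finsupp.single a v)
      = (L (Finsupp.single a 1)).sum fun b s => Finsupp.single b (s • v) := by
  simp [extMap, colMap]

/-- helper: `∑_{b ∈ supp g} δ_b (g b * c) = c • g`. -/
lemma sum_single_mul (g : B →₀ R) (c : R) :
    (g.sum fun b s => Finsupp.single b (s * c)) = c • g := by
  have : (g.sum fun b s => Finsupp.single b (s * c)) = g.sum fun b s => c • Finsupp.single b s := by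
    exact Finsupp.sum_congr fun b _ => by rw [mul_comm, Finsupp.smul_single, smul_eq_mul]
  rw [this, ← Finsupp.smul_sum, Finsupp.sum_single]

end Ext

section Ext2

variable {R : Type} [CommRing R]
variable {A B : Type} (L : (A →₀ R) →ₗ[R] (B →₀ R))

lemma swapF_single_apply {P : Type} (a : A) (v : P →₀ R) (p : P) :
    (swapF (Finsupp.single a v)) p = Finsupp.single a (v p) := by
  classical
  ext a'
  rw [swapF_apply, Finsupp.single_apply, Finsupp.single_apply,
    apply_ite (fun g : P →₀ R => g p)]
  simp

/-- conjugating `extMap` by `swapF` gives `mapRange`. -/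
lemma swapF_extMap {P : Type} (f : A →₀ (P →₀ R)) :
    swapF (extMap L (P →₀ R) f) = Finsupp.mapRange.linearMap L (swapF f) := by
  classical
  induction f using Finsupp.induction_linear with
  | zero => simp
  | add f g hf hg => simp [map_add, hf, hg]
  | single a v =>
      ext p b
      rw [swapF_apply, extMap_single, Finsupp.sum_apply, Finsupp.sum_apply,
        Finsupp.mapRange.linearMap_apply, Finsupp.mapRange_apply, swapF_single_apply,
        ← Finsupp.smul_single_one a (v p), map_smul]
      have : ((L (Finsupp.single a 1)).sum fun b' s =>
          ((Finsupp.single b' (s • v) : B →₀ (P →₀ R)) b) p)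
          = (L (Finsupp.single a 1)).sum fun b' s => if b' = b then s * v p else 0 := by
        refine Finsupp.sum_congr fun b' _ => ?_
        rw [Finsupp.single_apply, apply_ite (fun g : P →₀ R => g p)]
        simp
      rw [this, Finsupp.sum_ite_eq']
      by_cases hb : b ∈ (L (Finsupp.single a 1)).support
      · rw [if_pos hb, Finsupp.smul_apply, smul_eq_mul, mul_comm]
      · rw [if_neg hb, Finsupp.smul_apply, Finsupp.notMem_support_iff.1 hb]
        simp

/-- naturality of `extMap` in the coefficients. -/
lemma mapRange_extMap {N N' : Type} [AddCommGroup N] [Module R N]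
    [AddCommGroup N'] [Module R N'] (T : N →ₗ[R] N') (f : A →₀ N) :
    Finsupp.mapRange.linearMap T (extMap L N f)
      = extMap L N' (Finsupp.mapRange.linearMap T f) := by
  induction f using Finsupp.induction_linear with
  | zero => simp
  | add f g hf hg => simp [map_add, hf, hg]
  | single a v =>
      rw [extMap_single, map_finsuppSum, Finsupp.mapRange.linearMap_apply,
        Finsupp.mapRange_single, extMap_single]
      exact Finsupp.sum_congr fun b _ => by
        rw [Finsupp.mapRange.linearMap_apply, Finsupp.mapRange_single, map_smul]

/-- pointwise lifting along `mapRange`. -/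
lemma pointwise_lift {P N N' : Type} [AddCommGroup N] [Module R N]
    [AddCommGroup N'] [Module R N'] [DecidableEq N'] (T : N →ₗ[R] N') (h : P →₀ N')
    (hall : ∀ p, h p ∈ Set.range T) :
    ∃ w : P →₀ N, Finsupp.mapRange.linearMap T w = h := by
  classical
  refine ⟨Finsupp.onFinset h.support
    (fun p => if hp : h p = 0 then 0 else Classical.choose (hall p)) ?_, ?_⟩
  · intro p hp
    rw [Finsupp.mem_support_iff]
    intro h0
    apply hp
    simp only [h0, dif_pos]
  · ext p
    rw [Finsupp.mapRange.linearMap_apply, Finsupp.mapRange_apply, Finsupp.onFinset_apply]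
    by_cases h0 : h p = 0
    · rw [dif_pos h0, map_zero, h0]
    · rw [dif_neg h0]
      exact Classical.choose_spec (hall p)

end Ext2

section Ext3

variable {R : Type} [CommRing R] {A B : Type} (L : (A →₀ R) →ₗ[R] (B →₀ R))
variable {N : Type} [AddCommGroup N] [Module R N]

lemma extMap_apply (f : A →₀ N) (b : B) :
    extMap L N f b = f.sum fun a v => (L (Finsupp.single a 1)) b • v := by
  classical
  induction f using Finsupp.induction_linear with
  | zero => simp
  | add f g hf hg =>
      rw [map_add, Finsupp.add_apply, hf, hg,
        Finsupp.sum_add_index' (fun a => by simp) (fun a v w => by rw [smul_add])]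
  | single a v =>
      rw [extMap_single, Finsupp.sum_apply,
        Finsupp.sum_single_index (by rw [smul_zero])]
      have : ((L (Finsupp.single a 1)).sum fun b' s => (Finsupp.single b' (s • v)) b)
          = (L (Finsupp.single a 1)).sum fun b' s => if b' = b then s • v else 0 := by
        refine Finsupp.sum_congr fun b' _ => ?_
        rw [Finsupp.single_apply]
      rw [this, Finsupp.sum_ite_eq']
      by_cases hb : b ∈ (L (Finsupp.single a 1)).support
      · rw [if_pos hb]
      · rw [if_neg hb, Finsupp.notMem_support_iff.1 hb, zero_smul]

end Ext3

section Specialized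

variable (R₀ : Type) [CommRing R₀] [IsLocalRing R₀]
variable (R : Type) [CommRing R] [Algebra R₀ R]
variable (𝒜 : ℤ → Submodule R₀ R) [GradedAlgebra 𝒜]

/-- coordinates of elements of `I • ⊤` lie in `I`. -/
lemma mem_smul_top_coord {ι : Type} (I : Ideal R) {x : ι →₀ R}
    (hx : x ∈ I • (⊤ : Submodule R (ι →₀ R))) (a : ι) : x a ∈ I := by
  refine Submodule.smul_induction_on hx (fun r hr n _ => ?_) (fun y z hy hz => ?_)
  · rw [Finsupp.smul_apply, smul_eq_mul]; exact I.mul_mem_right _ hr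
  · rw [Finsupp.add_apply]; exact I.add_mem hy hz

lemma pz_mul_pos (hstd : IsStandardGraded R₀ R 𝒜) (r x : R) {n : ℤ} (hn : 0 < n)
    (hx : x ∈ 𝒜 n) : (GD.ofDecomposition 𝒜).proj 0 (r * x) = 0 := by
  set g := GD.ofDecomposition 𝒜 with hg
  obtain ⟨S, hS⟩ := g.decomp r
  have : r * x = ∑ d ∈ S, g.proj d r * x := by
    conv_lhs => rw [hS]
    rw [Finset.sum_mul]
  rw [this, g.proj_sum]
  refine Finset.sum_eq_zero fun d _ => ?_
  by_cases hd : d + n = 0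
  · have : g.proj d r = 0 := by
      have h1 : g.proj d r ∈ 𝒜 d := g.proj_mem d r
      rw [hstd.1 d (by omega)] at h1
      simpa using h1
    rw [this, zero_mul, g.proj_zero]
  · have hmem : g.proj d r * x ∈ 𝒜 (d + n) :=
      SetLike.mul_mem_graded (g.proj_mem d r) hx
    exact g.proj_ne hd hmem

lemma pz_mul_zero (r x : R) (hx : x ∈ 𝒜 0) :
    (GD.ofDecomposition 𝒜).proj 0 (r * x) = (GD.ofDecomposition 𝒜).proj 0 r * x := by
  set g := GD.ofDecomposition 𝒜 with hg
  obtain ⟨S, hS⟩ := g.decomp r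
  have : r * x = ∑ d ∈ S, g.proj d r * x := by
    conv_lhs => rw [hS]
    rw [Finset.sum_mul]
  rw [this, g.proj_sum]
  by_cases h0 : (0 : ℤ) ∈ S
  · rw [Finset.sum_eq_single 0]
    · have hmem : g.proj 0 r * x ∈ 𝒜 0 := by
        have := SetLike.mul_mem_graded (g.proj_mem 0 r) hx
        simpa using this
      exact g.proj_same hmem
    · intro d _ hd
      have hmem : g.proj d r * x ∈ 𝒜 (d + 0) := SetLike.mul_mem_graded (g.proj_mem d r) hx
      exact g.proj_ne (by omega) hmem
    · intro h; exact absurd h0 h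
  · have h1 : g.proj 0 r = 0 := g.proj_not_mem_decomp hS h0
    rw [h1, zero_mul]
    refine Finset.sum_eq_zero fun d hd => ?_
    have hmem : g.proj d r * x ∈ 𝒜 (d + 0) := SetLike.mul_mem_graded (g.proj_mem d r) hx
    refine g.proj_ne (fun h => h0 ?_) hmem
    have hd0 : d = 0 := by omega
    rwa [hd0] at hd

lemma one_not_mem_gradedMax [Nontrivial R] (hstd : IsStandardGraded R₀ R 𝒜) :
    (1 : R) ∉ gradedMax R₀ R 𝒜 := by
  classical
  intro hmem
  set g := GD.ofDecomposition 𝒜 with hg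
  obtain ⟨a, ha, b, hb, hab⟩ := Submodule.mem_sup.1 hmem
  -- proj 0 of a is 0
  have hpa : g.proj 0 a = 0 := by
    rw [irrelevant, Ideal.span] at ha
    obtain ⟨n, f, t, hsum⟩ := Submodule.mem_span_set'.1 ha
    rw [← hsum, g.proj_sum]
    refine Finset.sum_eq_zero fun i _ => ?_
    obtain ⟨m, hm⟩ := Set.mem_iUnion.1 (t i).2
    rw [smul_eq_mul]
    exact pz_mul_pos R₀ R 𝒜 hstd (f i) _ m.2 hm
  -- proj 0 of b is algebraMap of an element of the maximal ideal
  have hpb : ∃ c ∈ IsLocalRing.maximalIdeal R₀, algebraMap R₀ R c = g.proj 0 b := by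
    rw [Ideal.span] at hb
    obtain ⟨n, f, t, hsum⟩ := Submodule.mem_span_set'.1 hb
    have key : ∀ i : Fin n, ∃ c ∈ IsLocalRing.maximalIdeal R₀,
        algebraMap R₀ R c = g.proj 0 (f i • (t i : R)) := by
      intro i
      obtain ⟨c₀, hc₀, hc₀'⟩ := (t i).2
      have ht0 : (t i : R) ∈ 𝒜 0 := by
        rw [hstd.2.1]
        exact Submodule.mem_one.2 ⟨c₀, hc₀'⟩
      rw [smul_eq_mul, pz_mul_zero R₀ R 𝒜 (f i) _ ht0]
      have hf0 : g.proj 0 (f i) ∈ 𝒜 0 := g.proj_mem 0 (f i)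
      rw [hstd.2.1] at hf0
      obtain ⟨d, hd⟩ := Submodule.mem_one.1 hf0
      refine ⟨d * c₀, Ideal.mul_mem_left _ d hc₀, ?_⟩
      rw [map_mul, hd, hc₀']
    choose c hc hc' using key
    refine ⟨∑ i, c i, Ideal.sum_mem _ (fun i _ => hc i), ?_⟩
    rw [map_sum, ← hsum, g.proj_sum]
    exact Finset.sum_congr rfl fun i _ => hc' i
  obtain ⟨c, hc, hc'⟩ := hpb
  have h1 : (1 : R) = algebraMap R₀ R c := by
    have : g.proj 0 (1 : R) = 1 := g.proj_same (SetLike.one_mem_graded 𝒜)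
    calc (1 : R) = g.proj 0 (a + b) := by rw [hab, this]
    _ = g.proj 0 a + g.proj 0 b := g.proj_add 0 a b
    _ = algebraMap R₀ R c := by rw [hpa, hc', zero_add]
  -- c in the maximal ideal maps to 1, contradiction
  have hu : IsUnit (1 - c) := by
    have := (IsLocalRing.mem_maximalIdeal _).1 hc
    exact IsLocalRing.isUnit_one_sub_self_of_mem_nonunits _ this
  obtain ⟨u, hu'⟩ := hu
  have h2 : algebraMap R₀ R ((1 - c) * (↑u⁻¹ : R₀)) = 0 := by
    rw [map_mul]
    have : algebraMap R₀ R (1 - c) = 0 := by rw [map_sub, map_one, ← h1, sub_self]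
    rw [this, zero_mul]
  have h3 : (1 - c) * (↑u⁻¹ : R₀) = 1 := by
    rw [← hu']
    exact u.mul_inv
  rw [h3, map_one] at h2
  exact one_ne_zero h2

end Specialized

section ChaseSetup

variable (R₀ : Type) [CommRing R₀] [IsLocalRing R₀]
variable (R : Type) [CommRing R] [Algebra R₀ R]
variable (𝒜 : ℤ → Submodule R₀ R) [GradedAlgebra 𝒜]
variable (M : Type) [AddCommGroup M] [Module R M] [Module R₀ M]
variable (ℳ : ℤ → Submodule R₀ M) [DirectSum.Decomposition ℳ]
variable (FM : MinGradedFreeRes R₀ R 𝒜 M (gradedMax R₀ R 𝒜) ℳ)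
variable (Fk : MinGradedFreeRes R₀ R 𝒜 (resField R₀ R 𝒜) (gradedMax R₀ R 𝒜)
    (resFieldGrading R₀ R 𝒜))

/-- the double complex modules: `G_q`-indexed finsupps with values in `F_p`. -/
abbrev CmodX (p q : ℕ) : Type := (Σ j : ℤ, Fin (Fk.β q j)) →₀ stdFree R (FM.β p)

/-- vertical differential. -/
def DVX (p q : ℕ) : CmodX R₀ R 𝒜 M ℳ FM Fk (p+1) q →ₗ[R] CmodX R₀ R 𝒜 M ℳ FM Fk p q :=
  Finsupp.mapRange.linearMap (FM.d p)

/-- horizontal differential. -/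
def DHX (p q : ℕ) : CmodX R₀ R 𝒜 M ℳ FM Fk p (q+1) →ₗ[R] CmodX R₀ R 𝒜 M ℳ FM Fk p q :=
  extMap (Fk.d q) _

/-- grading data on `stdFree`. -/
def gdFX (β : ℤ → ℕ) : GD (stdFree R β) :=
  (GD.ofDecomposition 𝒜).finsupp (fun a => a.1)

lemma gdFX_mem_iff (β : ℤ → ℕ) (n : ℤ) (f : stdFree R β) :
    (gdFX R₀ R 𝒜 β).mem n f ↔ f ∈ stdFreeGrading R₀ R 𝒜 β n := Iff.rfl

/-- grading data on the double complex modules. -/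
def gdCX (p q : ℕ) : GD (CmodX R₀ R 𝒜 M ℳ FM Fk p q) :=
  (gdFX R₀ R 𝒜 (FM.β p)).finsupp (fun b => b.1)

lemma smul_stdFreeGrading {β : ℤ → ℕ} {s : R} {m : ℤ} (hs : s ∈ 𝒜 m)
    {f : stdFree R β} {l : ℤ} (hf : f ∈ stdFreeGrading R₀ R 𝒜 β l) :
    s • f ∈ stdFreeGrading R₀ R 𝒜 β (m + l) := by
  intro a
  rw [Finsupp.smul_apply, smul_eq_mul]
  have := SetLike.mul_mem_graded hs (hf a)
  have he : m + (l - a.1) = m + l - a.1 := by ring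
  rwa [he] at this

lemma single_mem_stdFreeGrading {β : ℤ → ℕ} (a : Σ j : ℤ, Fin (β j)) {r : R} {m : ℤ}
    (hr : r ∈ 𝒜 m) :
    Finsupp.single a r ∈ stdFreeGrading R₀ R 𝒜 β (m + a.1) := by
  classical
  intro a'
  rw [Finsupp.single_apply]
  by_cases h : a = a'
  · subst h
    rw [if_pos rfl]
    have he : m + a.1 - a.1 = m := by ring
    rwa [he]
  · rw [if_neg h]
    exact Submodule.zero_mem _

lemma DVX_graded (p q : ℕ) (n : ℤ) (u : CmodX R₀ R 𝒜 M ℳ FM Fk (p+1) q)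
    (hu : (gdCX R₀ R 𝒜 M ℳ FM Fk (p+1) q).mem n u) :
    (gdCX R₀ R 𝒜 M ℳ FM Fk p q).mem n (DVX R₀ R 𝒜 M ℳ FM Fk p q u) := by
  intro b
  show (gdFX R₀ R 𝒜 (FM.β p)).mem (n - b.1) (FM.d p (u b))
  exact FM.graded_d p (n - b.1) (u b) (hu b)

lemma DHX_graded (p q : ℕ) (n : ℤ) (u : CmodX R₀ R 𝒜 M ℳ FM Fk p (q+1))
    (hu : (gdCX R₀ R 𝒜 M ℳ FM Fk p (q+1)).mem n u) :
    (gdCX R₀ R 𝒜 M ℳ FM Fk p q).mem n (DHX R₀ R 𝒜 M ℳ FM Fk p q u) := by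
  classical
  intro b
  rw [gdFX_mem_iff]
  show (extMap (Fk.d q) _ u) b ∈ stdFreeGrading R₀ R 𝒜 (FM.β p) (n - b.1)
  rw [extMap_apply]
  rw [Finsupp.sum]
  refine Submodule.sum_mem _ fun a ha => ?_
  have hmatrix : (Fk.d q) (Finsupp.single a 1) ∈ stdFreeGrading R₀ R 𝒜 (Fk.β q) a.1 := by
    have h1 : (Finsupp.single a (1 : R)) ∈ stdFreeGrading R₀ R 𝒜 (Fk.β (q+1)) ((0 : ℤ) + a.1) :=
      single_mem_stdFreeGrading R₀ R 𝒜 a (SetLike.one_mem_graded 𝒜)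
    rw [zero_add] at h1
    exact Fk.graded_d q a.1 _ h1
  have hterm := smul_stdFreeGrading R₀ R 𝒜 (hmatrix b) (hu a)
  have he : a.1 - b.1 + (n - a.1) = n - b.1 := by ring
  rwa [he] at hterm

end ChaseSetup

section Chase

variable (R₀ : Type) [CommRing R₀] [IsLocalRing R₀]
variable (R : Type) [CommRing R] [Algebra R₀ R]
variable (𝒜 : ℤ → Submodule R₀ R) [GradedAlgebra 𝒜]
variable (M : Type) [AddCommGroup M] [Module R M] [Module R₀ M]
variable (ℳ : ℤ → Submodule R₀ M) [DirectSum.Decomposition ℳ]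
variable (FM : MinGradedFreeRes R₀ R 𝒜 M (gradedMax R₀ R 𝒜) ℳ)
variable (Fk : MinGradedFreeRes R₀ R 𝒜 (resField R₀ R 𝒜) (gradedMax R₀ R 𝒜)
    (resFieldGrading R₀ R 𝒜))

/-- the side condition carried through the zig-zag. -/
def SideX : (p q : ℕ) → CmodX R₀ R 𝒜 M ℳ FM Fk p q → Prop
  | 0, _, _ => True
  | (p'+1), q, u => ∃ t, DHX R₀ R 𝒜 M ℳ FM Fk p' q t = DVX R₀ R 𝒜 M ℳ FM Fk p' q u

lemma chase (i : ℕ) (j : ℤ)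
    (hbot : ∀ j', Fk.β i j' ≠ 0 → ℳ (j - j') = ⊥) :
    ∀ p q, p + q = i → ∀ u : CmodX R₀ R 𝒜 M ℳ FM Fk p q,
      (gdCX R₀ R 𝒜 M ℳ FM Fk p q).mem j u →
      SideX R₀ R 𝒜 M ℳ FM Fk p q u →
      ∃ w w', u = DVX R₀ R 𝒜 M ℳ FM Fk p q w + DHX R₀ R 𝒜 M ℳ FM Fk p q w' := by
  classical
  intro p
  induction p with
  | zero =>
      intro q h u hu _
      have hq : q = i := by omega
      subst hq
      have hker : ∀ b, u b ∈ Set.range (FM.d 0) := by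
        intro b
        have haug : FM.aug (u b) ∈ ℳ (j - b.1) := FM.graded_aug (j - b.1) (u b) (hu b)
        rw [hbot b.1 (Nat.pos_iff_ne_zero.1 b.2.pos)] at haug
        exact (FM.exact_aug (u b)).1 (Submodule.mem_bot R |>.1 haug)
      obtain ⟨w, hw⟩ := pointwise_lift (FM.d 0) u hker
      exact ⟨w, 0, by rw [map_zero, add_zero, ← hw]; rfl⟩
  | succ p ih =>
      intro q h u hu side
      obtain ⟨t, ht⟩ : ∃ t, DHX R₀ R 𝒜 M ℳ FM Fk p q t = DVX R₀ R 𝒜 M ℳ FM Fk p q u := side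
      -- lift to a homogeneous u'
      obtain ⟨u', hu', hDH⟩ := GD.hom_lift (gdCX R₀ R 𝒜 M ℳ FM Fk p (q+1))
        (gdCX R₀ R 𝒜 M ℳ FM Fk p q) (DHX R₀ R 𝒜 M ℳ FM Fk p q)
        (fun s f => map_sum _ f s) (DHX_graded R₀ R 𝒜 M ℳ FM Fk p q)
        (DVX_graded R₀ R 𝒜 M ℳ FM Fk p q j u hu) ht
      -- establish the side condition for u'
      have side' : SideX R₀ R 𝒜 M ℳ FM Fk p (q+1) u' := by
        cases p with
        | zero => trivial
        | succ p'' =>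
            have hX0 : DHX R₀ R 𝒜 M ℳ FM Fk p'' q
                (DVX R₀ R 𝒜 M ℳ FM Fk p'' (q+1) u') = 0 := by
              have hcomm := mapRange_extMap (Fk.d q) (FM.d p'') u'
              show extMap (Fk.d q) _ (Finsupp.mapRange.linearMap (FM.d p'') u') = 0
              rw [← hcomm]
              have heq : extMap (Fk.d q) (stdFree R (FM.β (p''+1))) u'
                  = DVX R₀ R 𝒜 M ℳ FM Fk (p''+1) q u := hDH
              rw [heq]
              refine Finsupp.ext fun b => ?_
              show FM.d p'' ((Finsupp.mapRange.linearMap (FM.d (p''+1)) u) b) = _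
              rw [Finsupp.mapRange.linearMap_apply, Finsupp.mapRange_apply,
                (FM.exact p'' (FM.d (p''+1) (u b))).2 ⟨u b, rfl⟩]
              simp
            have hσ : Finsupp.mapRange.linearMap (Fk.d q)
                (swapF (DVX R₀ R 𝒜 M ℳ FM Fk p'' (q+1) u')) = 0 := by
              rw [← swapF_extMap]
              show swapF (DHX R₀ R 𝒜 M ℳ FM Fk p'' q
                (DVX R₀ R 𝒜 M ℳ FM Fk p'' (q+1) u')) = 0
              rw [hX0, map_zero]
            have hker : ∀ a, (swapF (DVX R₀ R 𝒜 M ℳ FM Fk p'' (q+1) u')) a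
                ∈ Set.range (Fk.d (q+1)) := by
              intro a
              refine (Fk.exact q _).1 ?_
              have h3 := congrArg (fun z => z a) hσ
              simpa [Finsupp.mapRange.linearMap_apply, Finsupp.mapRange_apply] using h3
            obtain ⟨g, hg⟩ := pointwise_lift (Fk.d (q+1)) _ hker
            refine ⟨swapF.symm g, ?_⟩
            apply swapF.injective
            rw [show (DHX R₀ R 𝒜 M ℳ FM Fk p'' (q+1) (swapF.symm g))
                = extMap (Fk.d (q+1)) _ (swapF.symm g) from rfl]
            rw [swapF_extMap, LinearEquiv.apply_symm_apply, hg]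
      obtain ⟨w, w', hw⟩ := ih (q+1) (by omega) u' hu' side'
      -- now descend
      have hfirst : DHX R₀ R 𝒜 M ℳ FM Fk p q (DVX R₀ R 𝒜 M ℳ FM Fk p (q+1) w)
          = DVX R₀ R 𝒜 M ℳ FM Fk p q (DHX R₀ R 𝒜 M ℳ FM Fk (p+1) q w) :=
        (mapRange_extMap (Fk.d q) (FM.d p) w).symm
      have hsecond : DHX R₀ R 𝒜 M ℳ FM Fk p q (DHX R₀ R 𝒜 M ℳ FM Fk p (q+1) w') = 0 := by
        apply swapF.injective
        rw [show (DHX R₀ R 𝒜 M ℳ FM Fk p q (DHX R₀ R 𝒜 M ℳ FM Fk p (q+1) w'))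
            = extMap (Fk.d q) _ (extMap (Fk.d (q+1)) _ w') from rfl]
        rw [swapF_extMap, swapF_extMap, map_zero]
        refine Finsupp.ext fun a => ?_
        rw [Finsupp.mapRange.linearMap_apply, Finsupp.mapRange_apply,
          Finsupp.mapRange.linearMap_apply, Finsupp.mapRange_apply,
          (Fk.exact q (Fk.d (q+1) ((swapF w') a))).2 ⟨(swapF w') a, rfl⟩]
        simp
      have h1 : DVX R₀ R 𝒜 M ℳ FM Fk p q u
          = DVX R₀ R 𝒜 M ℳ FM Fk p q (DHX R₀ R 𝒜 M ℳ FM Fk (p+1) q w) := by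
        rw [← hDH, hw, map_add, hsecond, add_zero, hfirst]
      have hker : ∀ b, (u - DHX R₀ R 𝒜 M ℳ FM Fk (p+1) q w) b
          ∈ Set.range (FM.d (p+1)) := by
        intro b
        refine (FM.exact p _).1 ?_
        have h2 := congrArg (fun z => z b) h1
        simp only [DVX, Finsupp.mapRange.linearMap_apply, Finsupp.mapRange_apply] at h2
        rw [Finsupp.sub_apply, map_sub, h2, sub_self]
      obtain ⟨w'', hw''⟩ := pointwise_lift (FM.d (p+1)) _ hker
      refine ⟨w'', w, ?_⟩
      have hE : DVX R₀ R 𝒜 M ℳ FM Fk (p+1) q w''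
          = u - DHX R₀ R 𝒜 M ℳ FM Fk (p+1) q w := hw''
      rw [hE]; abel

end Chase

section Part1

variable (R₀ : Type) [CommRing R₀] [IsLocalRing R₀]
variable (R : Type) [CommRing R] [Algebra R₀ R]
variable (𝒜 : ℤ → Submodule R₀ R) [GradedAlgebra 𝒜]
variable (M : Type) [AddCommGroup M] [Module R M] [Module R₀ M]
variable (ℳ : ℤ → Submodule R₀ M) [DirectSum.Decomposition ℳ]
variable (FM : MinGradedFreeRes R₀ R 𝒜 M (gradedMax R₀ R 𝒜) ℳ)

/-- graded decomposition data on the residue field. -/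
def gdk : GD (resField R₀ R 𝒜) where
  mem n x := x ∈ resFieldGrading R₀ R 𝒜 n
  zero_mem n := Submodule.zero_mem _
  add_mem hx hy := Submodule.add_mem _ hx hy
  proj n x := if n = 0 then x else 0
  proj_add n x y := by by_cases h : n = 0 <;> simp [h]
  proj_zero n := by by_cases h : n = 0 <;> simp [h]
  proj_mem n x := by
    by_cases h : n = 0 <;> simp [resFieldGrading, h]
  proj_same {n x} h := by
    by_cases hn : n = 0
    · simp [hn]
    · simp only [resFieldGrading, if_neg hn] at h
      simp only [if_neg hn]
      exact (Submodule.mem_bot _ |>.1 h).symm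
  proj_ne {m n x} h hx := by
    by_cases hn : n = 0
    · subst hn
      simp only [resFieldGrading, if_neg h] at hx
      simp only [if_pos rfl]
      exact Submodule.mem_bot _ |>.1 hx
    · simp [hn]
  decomp x := ⟨{0}, by simp⟩

/-- each nonzero degree of `ℳ` is bounded below by some generator degree. -/
lemma exists_gen_le (n : ℤ) (hstd : IsStandardGraded R₀ R 𝒜) (hn : ℳ n ≠ ⊥) :
    ∃ j₀, FM.β 0 j₀ ≠ 0 ∧ j₀ ≤ n := by
  obtain ⟨m, hm, hm0⟩ := Submodule.exists_mem_ne_zero_of_ne_bot hn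
  obtain ⟨f₀, hf₀⟩ := FM.aug_surj m
  obtain ⟨f, hfmem, hf⟩ := GD.hom_lift (gdFX R₀ R 𝒜 (FM.β 0)) (GD.ofDecomposition ℳ)
    FM.aug (fun s g => map_sum _ g s) (fun n x hx => FM.graded_aug n x hx) hm hf₀
  have hfne : f ≠ 0 := by
    intro h0
    rw [h0, map_zero] at hf
    exact hm0 hf.symm
  obtain ⟨a, ha⟩ := Finsupp.ne_iff.1 hfne
  rw [Finsupp.coe_zero, Pi.zero_apply] at ha
  refine ⟨a.1, Nat.pos_iff_ne_zero.1 a.2.pos, ?_⟩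
  by_contra hlt
  have hbot : 𝒜 (n - a.1) = ⊥ := hstd.1 _ (by omega)
  have hmem2 : f a ∈ 𝒜 (n - a.1) := hfmem a
  rw [hbot] at hmem2
  exact ha (Submodule.mem_bot _ |>.1 hmem2)

end Part1

section Endgame

variable (R₀ : Type) [CommRing R₀] [IsLocalRing R₀]
variable (R : Type) [CommRing R] [Algebra R₀ R]
variable (𝒜 : ℤ → Submodule R₀ R) [GradedAlgebra 𝒜]
variable (M : Type) [AddCommGroup M] [Module R M] [Module R₀ M]
variable (ℳ : ℤ → Submodule R₀ M) [DirectSum.Decomposition ℳ]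
variable (FM : MinGradedFreeRes R₀ R 𝒜 M (gradedMax R₀ R 𝒜) ℳ)
variable (Fk : MinGradedFreeRes R₀ R 𝒜 (resField R₀ R 𝒜) (gradedMax R₀ R 𝒜)
    (resFieldGrading R₀ R 𝒜))

lemma key2 [Nontrivial R] (hstd : IsStandardGraded R₀ R 𝒜) (i : ℕ) (j : ℤ)
    (hij : FM.β i j ≠ 0) :
    ∃ j', Fk.β i j' ≠ 0 ∧ ℳ (j - j') ≠ ⊥ := by
  classical
  by_contra hcon
  push_neg at hcon
  have hbot : ∀ j', Fk.β i j' ≠ 0 → ℳ (j - j') = ⊥ := fun j' h => hcon j' h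
  have hm1 : (1 : R) ∉ gradedMax R₀ R 𝒜 := one_not_mem_gradedMax R₀ R 𝒜 hstd
  -- the basis vector of degree j in homological degree i
  set p0 : Σ j' : ℤ, Fin (FM.β i j') := ⟨j, ⟨0, Nat.pos_of_ne_zero hij⟩⟩ with hp0
  set x : stdFree R (FM.β i) := Finsupp.single p0 (1 : R) with hxdef
  have hx_mem : x ∈ stdFreeGrading R₀ R 𝒜 (FM.β i) j := by
    have h1 := single_mem_stdFreeGrading R₀ R 𝒜 p0 (SetLike.one_mem_graded 𝒜)
    rw [zero_add] at h1
    exact h1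
  -- a homogeneous preimage of 1 in G₀
  have h1mem : (gdk R₀ R 𝒜).mem 0 (1 : resField R₀ R 𝒜) := by
    show (1 : resField R₀ R 𝒜) ∈ resFieldGrading R₀ R 𝒜 0
    rw [resFieldGrading, if_pos rfl]
    trivial
  obtain ⟨f1, hf1⟩ := Fk.aug_surj (1 : resField R₀ R 𝒜)
  obtain ⟨y₀, hy₀mem, hy₀⟩ := GD.hom_lift (gdFX R₀ R 𝒜 (Fk.β 0)) (gdk R₀ R 𝒜)
    Fk.aug (fun s g => map_sum _ g s) (fun n z hz => Fk.graded_aug n z hz) h1mem hf1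
  -- u₀ = y₀ ⊗ x
  set u₀ : CmodX R₀ R 𝒜 M ℳ FM Fk i 0 :=
    Finsupp.mapRange (fun r => r • x) (zero_smul R x) y₀ with hu₀def
  have hu₀mem : (gdCX R₀ R 𝒜 M ℳ FM Fk i 0).mem j u₀ := by
    intro b
    show u₀ b ∈ stdFreeGrading R₀ R 𝒜 (FM.β i) (j - b.1)
    have hval : u₀ b = y₀ b • x := by rw [hu₀def, Finsupp.mapRange_apply]
    rw [hval]
    have h1 := smul_stdFreeGrading R₀ R 𝒜 (hy₀mem b) hx_mem
    have he : 0 - b.1 + j = j - b.1 := by ring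
    rwa [he] at h1
  -- representatives of Fk.aug (single b 1)
  set rb : (Σ j' : ℤ, Fin (Fk.β 0 j')) → R :=
    fun b => Classical.choose (Ideal.Quotient.mk_surjective (I := gradedMax R₀ R 𝒜)
      (Fk.aug (Finsupp.single b 1))) with hrbdef
  have hrb : ∀ b, Ideal.Quotient.mk (gradedMax R₀ R 𝒜) (rb b)
      = Fk.aug (Finsupp.single b 1) :=
    fun b => Classical.choose_spec (Ideal.Quotient.mk_surjective (I := gradedMax R₀ R 𝒜)
      (Fk.aug (Finsupp.single b 1)))
  have hsmulmk : ∀ (r : R) (z : resField R₀ R 𝒜),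
      r • z = Ideal.Quotient.mk (gradedMax R₀ R 𝒜) r * z := by
    intro r z
    rw [Algebra.smul_def, Ideal.Quotient.algebraMap_eq]
  -- the pairing of a G₀-coefficient vector with rb computes the augmentation
  have mkpair : ∀ f : stdFree R (Fk.β 0),
      Ideal.Quotient.mk (gradedMax R₀ R 𝒜) (f.sum fun b r => rb b * r) = Fk.aug f := by
    intro f
    conv_rhs => rw [← Finsupp.sum_single f]
    rw [map_finsuppSum, map_finsuppSum]
    refine Finsupp.sum_congr fun b _ => ?_
    rw [map_mul, hrb b, ← Finsupp.smul_single_one b (f b), map_smul, hsmulmk, mul_comm]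
  -- the side condition at (i,0)
  have side : SideX R₀ R 𝒜 M ℳ FM Fk i 0 u₀ := by
    cases i with
    | zero => trivial
    | succ p'' =>
        have hdx : FM.d p'' x ∈ gradedMax R₀ R 𝒜 • (⊤ : Submodule R (stdFree R (FM.β p''))) :=
          FM.minimal p'' ⟨x, rfl⟩
        have hcols : ∀ a, (swapF (DVX R₀ R 𝒜 M ℳ FM Fk p'' 0 u₀)) a
            ∈ Set.range (Fk.d 0) := by
          intro a
          have hcol : (swapF (DVX R₀ R 𝒜 M ℳ FM Fk p'' 0 u₀)) a
              = ((FM.d p'' x) a) • y₀ := by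
            refine Finsupp.ext fun b => ?_
            rw [swapF_apply]
            show (FM.d p'' (u₀ b)) a = _
            have hval : u₀ b = y₀ b • x := by rw [hu₀def, Finsupp.mapRange_apply]
            rw [hval, map_smul, Finsupp.smul_apply, Finsupp.smul_apply,
              smul_eq_mul, smul_eq_mul, mul_comm]
          rw [hcol]
          refine (Fk.exact_aug _).1 ?_
          rw [map_smul, hy₀, hsmulmk, mul_one]
          exact Ideal.Quotient.eq_zero_iff_mem.2
            (mem_smul_top_coord R (gradedMax R₀ R 𝒜) hdx a)
        obtain ⟨g, hg⟩ := pointwise_lift (Fk.d 0) _ hcols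
        refine ⟨swapF.symm g, ?_⟩
        apply swapF.injective
        rw [show (DHX R₀ R 𝒜 M ℳ FM Fk p'' 0 (swapF.symm g))
            = extMap (Fk.d 0) _ (swapF.symm g) from rfl]
        rw [swapF_extMap, LinearEquiv.apply_symm_apply, hg]
  -- run the zig-zag
  obtain ⟨w, w', hconc⟩ := chase R₀ R 𝒜 M ℳ FM Fk i j hbot i 0 (by omega) u₀ hu₀mem side
  -- the pairing map Λ
  set Λ : CmodX R₀ R 𝒜 M ℳ FM Fk i 0 →ₗ[R] stdFree R (FM.β i) :=
    Finsupp.lsum R (fun b => rb b •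
      (LinearMap.id : stdFree R (FM.β i) →ₗ[R] stdFree R (FM.β i))) with hΛdef
  have hΛapply : ∀ f : CmodX R₀ R 𝒜 M ℳ FM Fk i 0, Λ f = f.sum fun b v => rb b • v := by
    intro f
    rw [hΛdef, Finsupp.lsum_apply]
    exact Finsupp.sum_congr fun b _ => rfl
  -- Λ u₀ = s • x with mk s = 1
  set s : R := y₀.sum fun b r => rb b * r with hsdef
  have hΛu₀ : Λ u₀ = s • x := by
    rw [hΛapply, hu₀def, Finsupp.sum_mapRange_index (fun b => by simp)]
    rw [hsdef, Finsupp.sum, Finsupp.sum, Finset.sum_smul]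
    exact Finset.sum_congr rfl fun b _ => by rw [smul_smul]
  have hmks : Ideal.Quotient.mk (gradedMax R₀ R 𝒜) s = 1 := by rw [hsdef, mkpair, hy₀]
  have hs1 : s - 1 ∈ gradedMax R₀ R 𝒜 := by
    rw [← Ideal.Quotient.eq_zero_iff_mem, map_sub, hmks, map_one, sub_self]
  -- Λ kills the two boundary terms into m • ⊤
  have hΛDV : Λ (DVX R₀ R 𝒜 M ℳ FM Fk i 0 w)
      ∈ gradedMax R₀ R 𝒜 • (⊤ : Submodule R (stdFree R (FM.β i))) := by
    have heq : Λ (DVX R₀ R 𝒜 M ℳ FM Fk i 0 w)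
        = FM.d i (w.sum fun b v => rb b • v) := by
      rw [hΛapply]
      show (Finsupp.mapRange (⇑(FM.d i)) (map_zero _) w).sum (fun b v => rb b • v) = _
      rw [Finsupp.sum_mapRange_index (fun b => by simp),
        map_finsuppSum]
      exact Finsupp.sum_congr fun b _ => (map_smul _ _ _).symm
    rw [heq]
    exact FM.minimal i ⟨_, rfl⟩
  have hΛDH : ∀ v0 : CmodX R₀ R 𝒜 M ℳ FM Fk i 1, Λ (DHX R₀ R 𝒜 M ℳ FM Fk i 0 v0)
      ∈ gradedMax R₀ R 𝒜 • (⊤ : Submodule R (stdFree R (FM.β i))) := by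
    intro v0
    show Λ (extMap (Fk.d 0) _ v0) ∈ _
    induction v0 using Finsupp.induction_linear with
    | zero => rw [map_zero, map_zero]; exact Submodule.zero_mem _
    | add f g hf hg => rw [map_add, map_add]; exact Submodule.add_mem _ hf hg
    | single a v =>
        rw [extMap_single, map_finsuppSum]
        have heq : ((Fk.d 0) (Finsupp.single a 1)).sum
            (fun b t => Λ (Finsupp.single b (t • v)))
            = (((Fk.d 0) (Finsupp.single a 1)).sum fun b t => rb b * t) • v := by
          rw [Finsupp.sum, Finsupp.sum, Finset.sum_smul]
          refine Finset.sum_congr rfl fun b _ => ?_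
          rw [hΛdef]
          simp only [Finsupp.lsum_single, LinearMap.smul_apply, LinearMap.id_coe, id_eq]
          rw [smul_smul]
        rw [heq]
        refine Submodule.smul_mem_smul ?_ trivial
        rw [← Ideal.Quotient.eq_zero_iff_mem, mkpair]
        exact (Fk.exact_aug _).2 ⟨_, rfl⟩
  -- conclude x ∈ m • ⊤, contradiction
  have hx_in : x ∈ gradedMax R₀ R 𝒜 • (⊤ : Submodule R (stdFree R (FM.β i))) := by
    have hxeq : x = Λ (DVX R₀ R 𝒜 M ℳ FM Fk i 0 w)
        + Λ (DHX R₀ R 𝒜 M ℳ FM Fk i 0 w') - (s - 1) • x := by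
      rw [← map_add, ← hconc, hΛu₀, sub_smul, one_smul]
      abel
    rw [hxeq]
    refine Submodule.sub_mem _ (Submodule.add_mem _ hΛDV (hΛDH w')) ?_
    exact Submodule.smul_mem_smul hs1 trivial
  have hfin : x p0 ∈ gradedMax R₀ R 𝒜 :=
    mem_smul_top_coord R (gradedMax R₀ R 𝒜) hx_in p0
  rw [hxdef, Finsupp.single_eq_same] at hfin
  exact hm1 hfin

end Endgame
/-- `0 ≤ reg_R(M,k) + indeg M ≤ reg_R(k,k)` for `M ≠ 0`, where
`reg_R(M,k) = max_i {i − indeg Tor_i^R(M,k)}` is read off from minimal graded free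
resolutions. -/
theorem stmt12 (R₀ : Type) [CommRing R₀] [IsLocalRing R₀]
    (R : Type) [CommRing R] [Algebra R₀ R] [IsNoetherianRing R]
    (𝒜 : ℤ → Submodule R₀ R) [GradedAlgebra 𝒜] (hstd : IsStandardGraded R₀ R 𝒜)
    (M : Type) [AddCommGroup M] [Module R M] [Module R₀ M] [Module.Finite R M]
    (ℳ : ℤ → Submodule R₀ M) [DirectSum.Decomposition ℳ] (hMne : (degSet ℳ).Nonempty)
    (FM : MinGradedFreeRes R₀ R 𝒜 M (gradedMax R₀ R 𝒜) ℳ)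
    (Fk : MinGradedFreeRes R₀ R 𝒜 (resField R₀ R 𝒜) (gradedMax R₀ R 𝒜)
      (resFieldGrading R₀ R 𝒜)) :
    (∃ z ∈ regSet R₀ R 𝒜 _ FM, 0 ≤ z + indeg ℳ) ∧
    (∀ z ∈ regSet R₀ R 𝒜 _ FM, ∃ z' ∈ regSet R₀ R 𝒜 _ Fk, z + indeg ℳ ≤ z') := by
  classical
  rcases subsingleton_or_nontrivial R with hsub | hnt
  · exfalso
    obtain ⟨n, hn⟩ := hMne
    apply hn
    rw [Submodule.eq_bot_iff]
    intro x _
    calc x = (1 : R) • x := (one_smul R x).symm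
    _ = (0 : R) • x := by rw [Subsingleton.elim (1 : R) (0 : R)]
    _ = 0 := zero_smul R x
  obtain ⟨n₀, hn₀⟩ := hMne
  obtain ⟨j₀', hj₀', _⟩ := exists_gen_le R₀ R 𝒜 M ℳ FM n₀ hstd hn₀
  set S : Finset ℤ := (FM.finite 0).toFinset with hSdef
  have hSne : S.Nonempty := ⟨j₀', (Set.Finite.mem_toFinset _).2 hj₀'⟩
  set j₀ := S.min' hSne with hj₀def
  have hj₀mem : FM.β 0 j₀ ≠ 0 := (Set.Finite.mem_toFinset _).1 (S.min'_mem hSne)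
  have hlb : ∀ n ∈ degSet ℳ, j₀ ≤ n := by
    intro n hn
    obtain ⟨j₁, hj₁, hle⟩ := exists_gen_le R₀ R 𝒜 M ℳ FM n hstd hn
    exact le_trans (S.min'_le j₁ ((Set.Finite.mem_toFinset _).2 hj₁)) hle
  have hbdd : BddBelow (degSet ℳ) := ⟨j₀, hlb⟩
  have hindeg_ge : j₀ ≤ indeg ℳ := le_csInf ⟨n₀, hn₀⟩ hlb
  constructor
  · exact ⟨(0 : ℤ) - j₀, ⟨0, j₀, hj₀mem, by simp⟩, by linarith⟩
  · intro z hz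
    obtain ⟨i, j, hij, hzeq⟩ := hz
    obtain ⟨j', hkj', hne⟩ := key2 R₀ R 𝒜 M ℳ FM Fk hstd i j hij
    have hle2 : indeg ℳ ≤ j - j' := csInf_le hbdd hne
    exact ⟨(i : ℤ) - j', ⟨i, j', hkj', rfl⟩, by rw [hzeq]; linarith⟩
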